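/- arXiv:1102.2414 — 2 statements merged into one kernel-verified Lean document; each statement's English description precedes it below -/
import Mathlib

section
/- Let A and X be n×n complex matrices and 1 ≤ m ≤ n. Then D^m per(A)(X,…,X) = m! · Σ_{J∈Q_{m,n}} per A(J; X,…,X), i.e., m! times the sum over all strictly increasing m-tuples J of column indices of the permanent of the matrix obtained from A by replacing, for each index j in J, the j-th column of A by the j-th column of X. -/
open scoped Classical

noncomputable section

open scoped Matrix.Norms.L2Operator

/-- The permanent of a square complex matrix:
`per A = Σ_σ a_{1σ(1)} ⋯ a_{nσ(n)}`. -/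
def perm {k : ℕ} (A : Matrix (Fin k) (Fin k) ℂ) : ℂ :=
  ∑ σ : Equiv.Perm (Fin k), ∏ i, A i (σ i)

/-- `A(J; X¹,…,Xᵐ)` : the matrix obtained from `A` by replacing, for each `p`,
column `J p` of `A` by column `J p` of `X p`, keeping all other columns unchanged. -/
def replCols {n m : ℕ} (A : Matrix (Fin n) (Fin n) ℂ) (J : Fin m → Fin n)
    (X : Fin m → Matrix (Fin n) (Fin n) ℂ) : Matrix (Fin n) (Fin n) ℂ :=
  Matrix.of fun i j => if h : ∃ p, J p = j then X h.choose i j else A i j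

/-- `perm` as a continuous multilinear map in the columns. -/
def permCM (n : ℕ) : ContinuousMultilinearMap ℂ (fun _ : Fin n => (Fin n → ℂ)) ℂ :=
  ∑ σ : Equiv.Perm (Fin n),
    (ContinuousMultilinearMap.mkPiAlgebra ℂ (Fin n) ℂ).compContinuousLinearMap
      (fun j => ContinuousLinearMap.proj (σ j))

/-- transpose, as a continuous linear map from matrices to the pi type of columns. -/
def transCLM (n : ℕ) : Matrix (Fin n) (Fin n) ℂ →L[ℂ] (Fin n → Fin n → ℂ) :=
  LinearMap.toContinuousLinearMap
    { toFun := fun M => fun j i => M i j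
      map_add' := by intros; rfl
      map_smul' := by intros; rfl }

lemma permCM_apply (n : ℕ) (v : Fin n → (Fin n → ℂ)) :
    permCM n v = ∑ σ : Equiv.Perm (Fin n), ∏ j, v j (σ j) := by
  simp [permCM]

lemma permCM_cols (n : ℕ) (B : Matrix (Fin n) (Fin n) ℂ) :
    permCM n (fun j i => B i j) = perm B := by
  rw [permCM_apply, perm]
  refine Fintype.sum_equiv (Equiv.inv (Equiv.Perm (Fin n))) _ _ fun σ => ?_
  simp only [Equiv.inv_apply]
  rw [← Equiv.prod_comp σ (fun x => B x (σ⁻¹ x))]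
  simp

lemma perm_eq_comp (n : ℕ) : (perm : Matrix (Fin n) (Fin n) ℂ → ℂ) = ⇑(permCM n) ∘ ⇑(transCLM n) :=
  funext fun B => (permCM_cols n B).symm

/-- the matrix replacing columns of `A` in `s` by columns of `X`. -/
def rangeMat {n : ℕ} (A X : Matrix (Fin n) (Fin n) ℂ) (s : Set (Fin n)) :
    Matrix (Fin n) (Fin n) ℂ :=
  Matrix.of fun i j => if j ∈ s then X i j else A i j

lemma rangeMat_eq_replCols {n m : ℕ} (A X : Matrix (Fin n) (Fin n) ℂ) (J : Fin m → Fin n) :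
    rangeMat A X (Set.range J) = replCols A J fun _ => X := by
  funext i j
  by_cases h : ∃ p, J p = j
  · simp [rangeMat, replCols, h, Set.mem_range]
  · simp [rangeMat, replCols, h, Set.mem_range]

/-- for `1 ≤ m ≤ n`,
`D^m per(A)(X,…,X) = m! Σ_{J ∈ Q_{m,n}} per A(J; X,…,X)`. -/
theorem iteratedFDeriv_perm_apply_const_eq_sum_replCols (n m : ℕ) (hm : 1 ≤ m) (hmn : m ≤ n)
    (A X : Matrix (Fin n) (Fin n) ℂ) :
    iteratedFDeriv ℂ m perm A (fun _ => X) =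
      (m.factorial : ℂ) * ∑ J : {J : Fin m → Fin n // StrictMono J},
        perm (replCols A J.1 fun _ => X) := by
  have h1 : iteratedFDeriv ℂ m perm A (fun _ => X) =
      iteratedFDeriv ℂ m (permCM n) (transCLM n A) (fun _ => transCLM n X) := by
    rw [perm_eq_comp n, ContinuousLinearMap.iteratedFDeriv_comp_right (transCLM n)
      ((permCM n).contDiff (n := (⊤ : WithTop ℕ∞))) A le_top]
    rfl
  rw [h1, (permCM n).iteratedFDeriv_eq]
  have h2 : (permCM n).iteratedFDeriv m (transCLM n A) (fun _ => transCLM n X) =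
      ∑ e : Fin m ↪ Fin n, perm (rangeMat A X (Set.range e)) := by
    rw [ContinuousMultilinearMap.iteratedFDeriv, ContinuousMultilinearMap.sum_apply]
    refine Finset.sum_congr rfl fun e _ => ?_
    rw [ContinuousMultilinearMap.iteratedFDerivComponent_apply, ← permCM_cols]
    congr 1
    funext j i
    by_cases h : ∃ y, e y = j <;>
      simp [h, rangeMat, transCLM, Set.mem_range] <;> rfl
  rw [h2]
  -- counting argument
  set φ : Equiv.Perm (Fin m) × {J : Fin m → Fin n // StrictMono J} → (Fin m ↪ Fin n) :=
    fun p => ⟨p.2.1 ∘ p.1, p.2.2.injective.comp p.1.injective⟩ with hφdef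
  have hφ : Function.Bijective φ := by
    constructor
    · rintro ⟨π, J, hJ⟩ ⟨π', J', hJ'⟩ h
      have h' : J ∘ ⇑π = J' ∘ ⇑π' := congrArg (fun e : Fin m ↪ Fin n => ⇑e) h
      have hr : Set.range (J ∘ ⇑π) = Set.range (J' ∘ ⇑π') := by rw [h']
      rw [Set.range_comp, Set.range_comp, π.range_eq_univ, π'.range_eq_univ,
        Set.image_univ, Set.image_univ] at hr
      haveI : WellFoundedLT (Fin m) := inferInstance
      have hJJ : J = J' := (StrictMono.range_inj (β := Fin m) (γ := Fin n) hJ hJ').1 hr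
      subst hJJ
      have hππ : π = π' := by
        apply Equiv.ext
        intro i
        exact hJ.injective (congrFun h' i)
      simp [hππ]
    · intro e
      have hs : (Finset.univ.map e).card = m := by simp
      set iso := (Finset.univ.map e).orderIsoOfFin hs with hiso
      have hJ : StrictMono fun i => (iso i : Fin n) := fun a b hab => iso.strictMono hab
      have hmem : ∀ i, e i ∈ Finset.univ.map e := by intro i; simp
      have hinj : Function.Injective fun i => iso.symm ⟨e i, hmem i⟩ := by
        intro a b hab
        have h3 : (⟨e a, hmem a⟩ : {x // x ∈ Finset.univ.map e}) = ⟨e b, hmem b⟩ :=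
          iso.symm.injective hab
        exact e.injective (Subtype.ext_iff.1 h3)
      refine ⟨⟨Equiv.ofBijective _ (Finite.injective_iff_bijective.1 hinj),
        ⟨fun i => (iso i : Fin n), hJ⟩⟩, ?_⟩
      ext i
      simp [φ, Equiv.ofBijective_apply]
  have hcomp : ∀ p : Equiv.Perm (Fin m) × {J : Fin m → Fin n // StrictMono J},
      perm (rangeMat A X (Set.range p.2.1)) = perm (rangeMat A X (Set.range ⇑(φ p))) := by
    rintro ⟨π, J, hJ⟩
    simp [φ, Set.range_comp, Set.image_univ]
  rw [← Fintype.sum_bijective φ hφ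
    (fun p => perm (rangeMat A X (Set.range p.2.1)))
    (fun e => perm (rangeMat A X (Set.range ⇑e))) hcomp]
  simp only [rangeMat_eq_replCols]
  trans (∑ _x : Equiv.Perm (Fin m), ∑ J : {J : Fin m → Fin n // StrictMono J},
      perm (replCols A J.1 fun _ => X))
  · rw [Fintype.sum_prod_type]
  · rw [Finset.sum_const, Finset.card_univ, Fintype.card_perm, Fintype.card_fin, nsmul_eq_mul]
end
end

section
/- Let A, X^1, …, X^m be n×n complex matrices with 1 ≤ m ≤ n. Then D^m per(A)(X^1,…,X^m) = m! · Σ_{I,J∈Q_{m,n}} per A(I|J) · Δ_p(X^1[I|J], …, X^m[I|J]). -/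
open scoped Classical

noncomputable section

open scoped Matrix.Norms.L2Operator

/-- The strictly increasing enumeration of the complement of the range of an
injective tuple `I : Fin m → Fin n`; used to form `A(I|J)`, the submatrix of `A`
obtained by deleting rows `I` and columns `J`. -/
def delTuple {n m : ℕ} (I : Fin m → Fin n) (hI : Function.Injective I) : Fin (n - m) → Fin n :=
  (Finset.univ.image I)ᶜ.orderEmbOfFin
    (by simp [Finset.card_compl, Finset.card_image_of_injective _ hI])

/-- The mixed permanent `Δ_p(T¹,…,Tᵐ) = (1/m!) Σ_{σ ∈ S_m} per [T^{σ(1)}_{[1]},…,T^{σ(m)}_{[m]}]`,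
the `j`-th column of the matrix inside the permanent being the `j`-th column of `T^{σ(j)}`. -/
def mixedPerm {m : ℕ} (T : Fin m → Matrix (Fin m) (Fin m) ℂ) : ℂ :=
  (m.factorial : ℂ)⁻¹ * ∑ σ : Equiv.Perm (Fin m), perm (Matrix.of fun i j => T (σ j) i j)


namespace PermAux

variable {n m : ℕ}


def permCML (n : ℕ) : ContinuousMultilinearMap ℂ (fun _ : Fin n => (Fin n → ℂ)) ℂ :=
  ∑ σ : Equiv.Perm (Fin n),
    (ContinuousMultilinearMap.mkPiAlgebra ℂ (Fin n) ℂ).compContinuousLinearMap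
      fun i => ContinuousLinearMap.proj (σ i)

lemma permCML_apply {n : ℕ} (v : Fin n → (Fin n → ℂ)) :
    permCML n v = ∑ σ : Equiv.Perm (Fin n), ∏ i, v i (σ i) := by
  simp [permCML]

def matLE (n : ℕ) : Matrix (Fin n) (Fin n) ℂ ≃ₗ[ℂ] (Fin n → Fin n → ℂ) where
  toFun A := fun i j => A i j
  map_add' _ _ := rfl
  map_smul' _ _ := rfl
  invFun f := Matrix.of f
  left_inv _ := rfl
  right_inv _ := rfl

def matCLE (n : ℕ) : Matrix (Fin n) (Fin n) ℂ ≃L[ℂ] (Fin n → Fin n → ℂ) :=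
  (matLE n).toContinuousLinearEquiv

lemma lhs_eq {n m : ℕ} (A : Matrix (Fin n) (Fin n) ℂ) (X : Fin m → Matrix (Fin n) (Fin n) ℂ) :
    iteratedFDeriv ℂ m perm A X =
      ∑ e : Fin m ↪ Fin n, ∑ f : Equiv.Perm (Fin n),
        ∏ i, (if h : i ∈ Set.range e then X (e.toEquivRange.symm ⟨i, h⟩) i (f i)
              else A i (f i)) := by
  have hperm : perm = (⇑(permCML n)) ∘ ⇑((matCLE n : Matrix (Fin n) (Fin n) ℂ →L[ℂ] _)) := by
    funext B
    simp [permCML_apply, perm, matCLE, matLE]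
    rfl
  rw [hperm, ContinuousLinearMap.iteratedFDeriv_comp_right _ ((permCML n).contDiff) A
    (le_top : (m : WithTop ℕ∞) ≤ ⊤)]
  rw [ContinuousMultilinearMap.compContinuousLinearMap_apply]
  rw [(permCML n).iteratedFDeriv_eq m]
  rw [ContinuousMultilinearMap.iteratedFDeriv]
  simp only [ContinuousMultilinearMap.sum_apply,
    ContinuousMultilinearMap.iteratedFDerivComponent_apply, Pi.compRightL_apply]
  refine Finset.sum_congr rfl fun e _ => ?_
  rw [permCML_apply]
  refine Finset.sum_congr rfl fun f _ => ?_
  refine Finset.prod_congr rfl fun i _ => ?_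
  have hm : ∀ B : Matrix (Fin n) (Fin n) ℂ,
      ((matCLE n) : Matrix (Fin n) (Fin n) ℂ →L[ℂ] (Fin n → Fin n → ℂ)) B = fun i j => B i j :=
    fun B => rfl
  by_cases h : i ∈ Set.range e
  · obtain ⟨p, rfl⟩ := h
    simp only [dif_pos (Set.mem_range_self p), hm,
      Function.Embedding.toEquivRange_symm_apply_self]
  · simp only [h, dif_neg, not_false_iff, hm]




lemma card_image_tuple {u : Fin m → Fin n} (hu : Function.Injective u) :
    (Finset.univ.image u).card = m := by
  rw [Finset.card_image_of_injective _ hu, Finset.card_univ, Fintype.card_fin]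

lemma card_compl_image {u : Fin m → Fin n} (hu : Function.Injective u) :
    (Finset.univ.image u)ᶜ.card = n - m := by
  simp [Finset.card_compl, card_image_tuple hu]

def idxOf (s : Finset (Fin n)) {k : ℕ} (h : s.card = k) (x : Fin n) (hx : x ∈ s) : Fin k :=
  (s.orderIsoOfFin h).symm ⟨x, hx⟩

lemma orderEmbOfFin_idxOf (s : Finset (Fin n)) {k : ℕ} (h : s.card = k) (x : Fin n) (hx : x ∈ s) :
    s.orderEmbOfFin h (idxOf s h x hx) = x := by
  rw [idxOf, ← Finset.coe_orderIsoOfFin_apply, OrderIso.apply_symm_apply]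

def permIn (s : Finset (Fin n)) {k : ℕ} (h : s.card = k) (v : Fin k → Fin n)
    (hv : Function.Injective v) (hmem : ∀ r, v r ∈ s) : Equiv.Perm (Fin k) :=
  Equiv.ofBijective (fun r => idxOf s h (v r) (hmem r))
    ((Finite.injective_iff_bijective).1 (fun a b hab => by
      apply hv
      have h2 := congrArg (s.orderEmbOfFin h) hab
      rwa [orderEmbOfFin_idxOf, orderEmbOfFin_idxOf] at h2))

lemma orderEmbOfFin_permIn (s : Finset (Fin n)) {k : ℕ} (h : s.card = k) (v : Fin k → Fin n)
    (hv : Function.Injective v) (hmem : ∀ r, v r ∈ s) (r : Fin k) :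
    s.orderEmbOfFin h (permIn s h v hv hmem r) = v r :=
  orderEmbOfFin_idxOf _ _ _ _

lemma permIn_unique (s : Finset (Fin n)) {k : ℕ} (h : s.card = k) (v : Fin k → Fin n)
    (hv : Function.Injective v) (hmem : ∀ r, v r ∈ s) (γ : Equiv.Perm (Fin k))
    (hγ : ∀ r, s.orderEmbOfFin h (γ r) = v r) : γ = permIn s h v hv hmem := by
  apply Equiv.ext; intro r
  apply (s.orderEmbOfFin h).injective
  rw [hγ r, orderEmbOfFin_permIn]

lemma image_orderEmbOfFin (s : Finset (Fin n)) {k : ℕ} (h : s.card = k) :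
    Finset.univ.image ⇑(s.orderEmbOfFin h) = s := by
  ext x
  simp only [Finset.mem_image, Finset.mem_univ, true_and]
  constructor
  · rintro ⟨a, rfl⟩; exact Finset.orderEmbOfFin_mem s h a
  · intro hx
    have h2 : x ∈ Set.range (s.orderEmbOfFin h) := by
      rw [Finset.range_orderEmbOfFin]; exact hx
    exact h2

def sortTup (u : Fin m → Fin n) (hu : Function.Injective u) :
    {I : Fin m → Fin n // StrictMono I} :=
  ⟨⇑((Finset.univ.image u).orderEmbOfFin (card_image_tuple hu)),
    ((Finset.univ.image u).orderEmbOfFin (card_image_tuple hu)).strictMono⟩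

lemma image_sortTup (u : Fin m → Fin n) (hu : Function.Injective u) :
    Finset.univ.image (sortTup u hu).1 = Finset.univ.image u :=
  image_orderEmbOfFin _ _

def permTup (u : Fin m → Fin n) (hu : Function.Injective u) : Equiv.Perm (Fin m) :=
  permIn (Finset.univ.image u) (card_image_tuple hu) u hu
    (fun p => Finset.mem_image_of_mem u (Finset.mem_univ p))

lemma sortTup_permTup (u : Fin m → Fin n) (hu : Function.Injective u) (p : Fin m) :
    (sortTup u hu).1 (permTup u hu p) = u p :=
  orderEmbOfFin_permIn _ _ _ _ _ _

lemma factor_unique {u : Fin m → Fin n} (hu : Function.Injective u)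
    (I : {I : Fin m → Fin n // StrictMono I}) (π : Equiv.Perm (Fin m))
    (h : ∀ p, I.1 (π p) = u p) :
    I = sortTup u hu ∧ π = permTup u hu := by
  have himg : ∀ x, I.1 x ∈ Finset.univ.image u := by
    intro x
    rw [Finset.mem_image]
    exact ⟨π.symm x, Finset.mem_univ _, by rw [← h (π.symm x), Equiv.apply_symm_apply]⟩
  have hIfun : I.1 = ⇑((Finset.univ.image u).orderEmbOfFin (card_image_tuple hu)) :=
    Finset.orderEmbOfFin_unique _ himg I.2
  have hI : I = sortTup u hu := Subtype.ext hIfun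
  refine ⟨hI, ?_⟩
  apply permIn_unique
  intro p
  rw [← hIfun, h p]

lemma delTuple_strictMono (I : Fin m → Fin n) (hI : Function.Injective I) :
    StrictMono (delTuple I hI) :=
  OrderEmbedding.strictMono _

lemma delTuple_mem_compl (I : Fin m → Fin n) (hI : Function.Injective I) (r : Fin (n - m)) :
    delTuple I hI r ∈ (Finset.univ.image I)ᶜ :=
  Finset.orderEmbOfFin_mem _ _ r

def splitEquiv (hmn : m ≤ n) (I : Fin m → Fin n) (hI : Function.Injective I) :
    (Fin m ⊕ Fin (n - m)) ≃ Fin n :=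
  Equiv.ofBijective (Sum.elim I (delTuple I hI)) <| by
    rw [Fintype.bijective_iff_injective_and_card]
    refine ⟨?_, by simp [Nat.add_sub_cancel' hmn]⟩
    have hd : ∀ (p : Fin m) (r : Fin (n - m)), I p ≠ delTuple I hI r := by
      intro p r hpr
      exact absurd (hpr ▸ Finset.mem_image_of_mem I (Finset.mem_univ p))
        (Finset.mem_compl.1 (delTuple_mem_compl I hI r))
    rintro (p | r) (q | s) hpq <;>
      simp only [Sum.elim_inl, Sum.elim_inr] at hpq
    · exact congrArg Sum.inl (hI hpq)
    · exact absurd hpq (hd p s)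
    · exact absurd hpq.symm (hd q r)
    · exact congrArg Sum.inr ((delTuple_strictMono I hI).injective hpq)

lemma splitEquiv_inl (hmn : m ≤ n) (I : Fin m → Fin n) (hI : Function.Injective I) (q : Fin m) :
    splitEquiv hmn I hI (Sum.inl q) = I q := rfl

lemma splitEquiv_inr (hmn : m ≤ n) (I : Fin m → Fin n) (hI : Function.Injective I)
    (r : Fin (n - m)) : splitEquiv hmn I hI (Sum.inr r) = delTuple I hI r := rfl

lemma splitEquiv_symm_inl (hmn : m ≤ n) (I : Fin m → Fin n) (hI : Function.Injective I)
    (q : Fin m) : (splitEquiv hmn I hI).symm (I q) = Sum.inl q :=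
  (Equiv.symm_apply_eq _).2 rfl

lemma splitEquiv_symm_inr (hmn : m ≤ n) (I : Fin m → Fin n) (hI : Function.Injective I)
    (r : Fin (n - m)) : (splitEquiv hmn I hI).symm (delTuple I hI r) = Sum.inr r :=
  (Equiv.symm_apply_eq _).2 rfl

/-- The permutation built from pieces: sends `I q` to `J (α q)` and
`delTuple I r` to `delTuple J (β r)`. -/
def joinPerm (hmn : m ≤ n) (I J : {I : Fin m → Fin n // StrictMono I})
    (α : Equiv.Perm (Fin m)) (β : Equiv.Perm (Fin (n - m))) : Equiv.Perm (Fin n) :=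
  (splitEquiv hmn I.1 I.2.injective).symm.trans
    ((Equiv.sumCongr α β).trans (splitEquiv hmn J.1 J.2.injective))

lemma joinPerm_left (hmn : m ≤ n) (I J : {I : Fin m → Fin n // StrictMono I})
    (α : Equiv.Perm (Fin m)) (β : Equiv.Perm (Fin (n - m))) (q : Fin m) :
    joinPerm hmn I J α β (I.1 q) = J.1 (α q) := by
  simp only [joinPerm, Equiv.trans_apply, splitEquiv_symm_inl, Equiv.sumCongr_apply,
    Sum.map_inl, splitEquiv_inl]

lemma joinPerm_right (hmn : m ≤ n) (I J : {I : Fin m → Fin n // StrictMono I})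
    (α : Equiv.Perm (Fin m)) (β : Equiv.Perm (Fin (n - m))) (r : Fin (n - m)) :
    joinPerm hmn I J α β (delTuple I.1 I.2.injective r) = delTuple J.1 J.2.injective (β r) := by
  simp only [joinPerm, Equiv.trans_apply, splitEquiv_symm_inr, Equiv.sumCongr_apply,
    Sum.map_inr, splitEquiv_inr]

lemma emb_sum_decomp (G : (Fin m ↪ Fin n) → ℂ) :
    ∑ e : Fin m ↪ Fin n, G e =
      ∑ I : {I : Fin m → Fin n // StrictMono I}, ∑ π : Equiv.Perm (Fin m),
        G ⟨I.1 ∘ π, I.2.injective.comp π.injective⟩ := by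
  rw [← Fintype.sum_prod_type']
  refine (Fintype.sum_bijective
    (fun t : {I : Fin m → Fin n // StrictMono I} × Equiv.Perm (Fin m) =>
      (⟨t.1.1 ∘ t.2, t.1.2.injective.comp t.2.injective⟩ : Fin m ↪ Fin n))
    ⟨?_, ?_⟩ _ G (fun t => rfl)).symm
  · rintro ⟨I, π⟩ ⟨I', π'⟩ hII
    have h : ∀ p, I.1 (π p) = I'.1 (π' p) := fun p => congrFun (congrArg (⇑) hII) p
    have hu : Function.Injective (fun p => I'.1 (π' p)) :=
      I'.2.injective.comp π'.injective
    obtain ⟨e1, e2⟩ := factor_unique hu I π h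
    obtain ⟨e3, e4⟩ := factor_unique hu I' π' (fun _ => rfl)
    rw [Prod.ext_iff]
    exact ⟨e1.trans e3.symm, e2.trans e4.symm⟩
  · intro e
    refine ⟨⟨sortTup e e.injective, permTup e e.injective⟩, ?_⟩
    refine DFunLike.ext _ _ fun p => ?_
    exact sortTup_permTup e e.injective p

lemma perm_sum_decomp (hmn : m ≤ n) (I : {I : Fin m → Fin n // StrictMono I})
    (G : Equiv.Perm (Fin n) → ℂ) :
    ∑ f : Equiv.Perm (Fin n), G f =
      ∑ J : {J : Fin m → Fin n // StrictMono J}, ∑ α : Equiv.Perm (Fin m),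
        ∑ β : Equiv.Perm (Fin (n - m)), G (joinPerm hmn I J α β) := by
  rw [← Fintype.sum_prod_type', ← Fintype.sum_prod_type']
  refine (Fintype.sum_bijective
    (fun t : ({J : Fin m → Fin n // StrictMono J} ×
        Equiv.Perm (Fin m)) × Equiv.Perm (Fin (n - m)) =>
      joinPerm hmn I t.1.1 t.1.2 t.2)
    ⟨?_, ?_⟩ _ G (fun t => rfl)).symm
  · rintro ⟨⟨J, α⟩, β⟩ ⟨⟨J', α'⟩, β'⟩ hJJ
    have h : ∀ q, J.1 (α q) = J'.1 (α' q) := fun q => by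
      have h1 := congrFun (congrArg (⇑) hJJ) (I.1 q)
      rwa [joinPerm_left, joinPerm_left] at h1
    have hu : Function.Injective (fun q => J'.1 (α' q)) :=
      J'.2.injective.comp α'.injective
    obtain ⟨e1, e2⟩ := factor_unique hu J α h
    obtain ⟨e3, e4⟩ := factor_unique hu J' α' (fun _ => rfl)
    have hJ : J = J' := e1.trans e3.symm
    have hβ : β = β' := by
      apply Equiv.ext; intro r
      apply (delTuple_strictMono J'.1 J'.2.injective).injective
      have h1 := congrFun (congrArg (⇑) hJJ) (delTuple I.1 I.2.injective r)
      rw [joinPerm_right, joinPerm_right] at h1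
      rw [← h1]
      subst hJ
      rfl
    rw [Prod.ext_iff, Prod.ext_iff]
    exact ⟨⟨hJ, e2.trans e4.symm⟩, hβ⟩
  · intro f
    have hu : Function.Injective (fun q => f (I.1 q)) :=
      f.injective.comp I.2.injective
    set J := sortTup (fun q => f (I.1 q)) hu with hJdef
    have hcard : (Finset.univ.image J.1)ᶜ.card = n - m := card_compl_image J.2.injective
    have hv : Function.Injective (fun r => f (delTuple I.1 I.2.injective r)) :=
      f.injective.comp (delTuple_strictMono I.1 I.2.injective).injective
    have hmem : ∀ r, f (delTuple I.1 I.2.injective r) ∈ (Finset.univ.image J.1)ᶜ := by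
      intro r
      rw [Finset.mem_compl, image_sortTup]
      intro hmem'
      obtain ⟨q, _, hq⟩ := Finset.mem_image.1 hmem'
      exact absurd ((f.injective hq) ▸ Finset.mem_image_of_mem I.1 (Finset.mem_univ q))
        (Finset.mem_compl.1 (delTuple_mem_compl I.1 I.2.injective r))
    refine ⟨⟨⟨J, permTup (fun q => f (I.1 q)) hu⟩,
      permIn ((Finset.univ.image J.1)ᶜ) hcard _ hv hmem⟩, ?_⟩
    apply Equiv.ext; intro x
    obtain ⟨y, rfl⟩ : ∃ y, splitEquiv hmn I.1 I.2.injective y = x :=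
      ⟨_, Equiv.apply_symm_apply _ x⟩
    cases y with
    | inl q =>
      rw [splitEquiv_inl, joinPerm_left]
      exact sortTup_permTup _ hu q
    | inr r =>
      rw [splitEquiv_inr, joinPerm_right]
      exact orderEmbOfFin_permIn _ hcard _ hv hmem r


lemma perm_pair_sum {m : ℕ} (g : Equiv.Perm (Fin m) → Equiv.Perm (Fin m) → ℂ) :
    ∑ π : Equiv.Perm (Fin m), ∑ α : Equiv.Perm (Fin m), g π α =
      ∑ σ : Equiv.Perm (Fin m), ∑ ρ : Equiv.Perm (Fin m), g ((ρ.trans σ).symm) ρ := by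
  rw [← Fintype.sum_prod_type', ← Fintype.sum_prod_type']
  refine (Fintype.sum_bijective
    (fun t : Equiv.Perm (Fin m) × Equiv.Perm (Fin m) => (((t.2.trans t.1).symm), t.2))
    (Function.bijective_iff_has_inverse.mpr
      ⟨fun t => (t.2.symm.trans t.1.symm, t.2), ?_, ?_⟩) _ _ (fun t => rfl)).symm
  · rintro ⟨σ, ρ⟩
    refine Prod.ext ?_ rfl
    apply Equiv.ext; intro x
    simp
  · rintro ⟨π, α⟩
    refine Prod.ext ?_ rfl
    apply Equiv.ext; intro x
    simp

lemma term_eval {n m : ℕ} (hmn : m ≤ n) (A : Matrix (Fin n) (Fin n) ℂ)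
    (X : Fin m → Matrix (Fin n) (Fin n) ℂ)
    (I J : {I : Fin m → Fin n // StrictMono I}) (π α : Equiv.Perm (Fin m))
    (β : Equiv.Perm (Fin (n - m))) :
    (∏ i, (if h : i ∈ Set.range ⇑(⟨I.1 ∘ π, I.2.injective.comp π.injective⟩ : Fin m ↪ Fin n)
        then X ((⟨I.1 ∘ π, I.2.injective.comp π.injective⟩ : Fin m ↪ Fin n).toEquivRange.symm
            ⟨i, h⟩) i (joinPerm hmn I J α β i)
        else A i (joinPerm hmn I J α β i))) =
      (∏ q, X (π.symm q) (I.1 q) (J.1 (α q))) *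
        (∏ r, A (delTuple I.1 I.2.injective r) (delTuple J.1 J.2.injective (β r))) := by
  set e : Fin m ↪ Fin n := ⟨I.1 ∘ π, I.2.injective.comp π.injective⟩ with he
  rw [← Equiv.prod_comp (splitEquiv hmn I.1 I.2.injective), Fintype.prod_sum_type]
  congr 1
  · refine Finset.prod_congr rfl fun q _ => ?_
    rw [splitEquiv_inl]
    have hmem : I.1 q ∈ Set.range ⇑e := ⟨π.symm q, by simp [he]⟩
    rw [dif_pos hmem]
    have hq : e.toEquivRange.symm ⟨I.1 q, hmem⟩ = π.symm q := by
      rw [Equiv.symm_apply_eq]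
      apply Subtype.ext
      simp [he, Function.Embedding.toEquivRange_apply]
    rw [hq, joinPerm_left]
  · refine Finset.prod_congr rfl fun r _ => ?_
    rw [splitEquiv_inr]
    have hmem : delTuple I.1 I.2.injective r ∉ Set.range ⇑e := by
      rintro ⟨p, hp⟩
      have h2 : delTuple I.1 I.2.injective r ∈ Finset.univ.image I.1 := by
        rw [← hp]; exact Finset.mem_image_of_mem I.1 (Finset.mem_univ (π p))
      exact absurd h2
        (Finset.mem_compl.1 (delTuple_mem_compl I.1 I.2.injective r))
    rw [dif_neg hmem, joinPerm_right]

end PermAux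

/-- for `1 ≤ m ≤ n`,
`D^m per(A)(X¹,…,Xᵐ) = m! Σ_{I,J ∈ Q_{m,n}} per A(I|J) ⬝ Δ_p(X¹[I|J],…,Xᵐ[I|J])`. -/
theorem iteratedFDeriv_perm_eq_sum_mixedPerm (n m : ℕ) (hm : 1 ≤ m) (hmn : m ≤ n)
    (A : Matrix (Fin n) (Fin n) ℂ) (X : Fin m → Matrix (Fin n) (Fin n) ℂ) :
    iteratedFDeriv ℂ m perm A X =
      (m.factorial : ℂ) * ∑ I : {I : Fin m → Fin n // StrictMono I},
        ∑ J : {J : Fin m → Fin n // StrictMono J},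
          perm (A.submatrix (delTuple I.1 I.2.injective) (delTuple J.1 J.2.injective)) *
            mixedPerm (fun p => (X p).submatrix I.1 J.1) := by
  rw [PermAux.lhs_eq A X, PermAux.emb_sum_decomp, Finset.mul_sum]
  refine Finset.sum_congr rfl fun I _ => ?_
  rw [Finset.mul_sum]
  have h1 : ∀ π : Equiv.Perm (Fin m),
      (∑ f : Equiv.Perm (Fin n), ∏ i,
        (if h : i ∈ Set.range ⇑(⟨I.1 ∘ π, I.2.injective.comp π.injective⟩ : Fin m ↪ Fin n)
          then X ((⟨I.1 ∘ π, I.2.injective.comp π.injective⟩ : Fin m ↪ Fin n).toEquivRange.symm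
              ⟨i, h⟩) i (f i)
          else A i (f i))) =
      ∑ J : {J : Fin m → Fin n // StrictMono J}, ∑ α : Equiv.Perm (Fin m),
        ∑ β : Equiv.Perm (Fin (n - m)),
          (∏ q, X (π.symm q) (I.1 q) (J.1 (α q))) *
            (∏ r, A (delTuple I.1 I.2.injective r) (delTuple J.1 J.2.injective (β r))) := by
    intro π
    rw [PermAux.perm_sum_decomp hmn I]
    refine Finset.sum_congr rfl fun J _ => ?_
    refine Finset.sum_congr rfl fun α _ => ?_
    refine Finset.sum_congr rfl fun β _ => ?_
    exact PermAux.term_eval hmn A X I J π α β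
  rw [Finset.sum_congr rfl (fun π _ => h1 π), Finset.sum_comm]
  refine Finset.sum_congr rfl fun J _ => ?_
  have h2 : ∀ (π α : Equiv.Perm (Fin m)),
      (∑ β : Equiv.Perm (Fin (n - m)),
        (∏ q, X (π.symm q) (I.1 q) (J.1 (α q))) *
          (∏ r, A (delTuple I.1 I.2.injective r) (delTuple J.1 J.2.injective (β r)))) =
      (∏ q, X (π.symm q) (I.1 q) (J.1 (α q))) *
        ∑ β : Equiv.Perm (Fin (n - m)),
          (∏ r, A (delTuple I.1 I.2.injective r) (delTuple J.1 J.2.injective (β r))) :=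
    fun π α => (Finset.mul_sum _ _ _).symm
  have h3 : ∀ π : Equiv.Perm (Fin m),
      (∑ α : Equiv.Perm (Fin m),
        (∏ q, X (π.symm q) (I.1 q) (J.1 (α q))) *
          ∑ β : Equiv.Perm (Fin (n - m)),
            (∏ r, A (delTuple I.1 I.2.injective r) (delTuple J.1 J.2.injective (β r)))) =
      (∑ α : Equiv.Perm (Fin m), ∏ q, X (π.symm q) (I.1 q) (J.1 (α q))) *
        ∑ β : Equiv.Perm (Fin (n - m)),
          (∏ r, A (delTuple I.1 I.2.injective r) (delTuple J.1 J.2.injective (β r))) :=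
    fun π => (Finset.sum_mul _ _ _).symm
  rw [Finset.sum_congr rfl (fun π _ => by rw [Finset.sum_congr rfl (fun α _ => h2 π α), h3 π]),
    ← Finset.sum_mul]
  have h4 : (∑ π : Equiv.Perm (Fin m), ∑ α : Equiv.Perm (Fin m),
      ∏ q, X (π.symm q) (I.1 q) (J.1 (α q))) =
      ∑ σ : Equiv.Perm (Fin m), ∑ ρ : Equiv.Perm (Fin m),
        ∏ q, X (σ (ρ q)) (I.1 q) (J.1 (ρ q)) := by
    rw [PermAux.perm_pair_sum (fun π α => ∏ q, X (π.symm q) (I.1 q) (J.1 (α q)))]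
    refine Finset.sum_congr rfl fun σ _ => Finset.sum_congr rfl fun ρ _ => ?_
    refine Finset.prod_congr rfl fun q _ => ?_
    simp [Equiv.trans_apply]
  rw [h4]
  have hsub : perm (A.submatrix (delTuple I.1 I.2.injective) (delTuple J.1 J.2.injective)) =
      ∑ β : Equiv.Perm (Fin (n - m)),
        ∏ r, A (delTuple I.1 I.2.injective r) (delTuple J.1 J.2.injective (β r)) := by
    simp [perm, Matrix.submatrix_apply]
  have hmix : mixedPerm (fun p => (X p).submatrix I.1 J.1) =
      (m.factorial : ℂ)⁻¹ * ∑ σ : Equiv.Perm (Fin m), ∑ ρ : Equiv.Perm (Fin m),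
        ∏ q, X (σ (ρ q)) (I.1 q) (J.1 (ρ q)) := by
    simp [mixedPerm, perm, Matrix.submatrix_apply]
  rw [hsub, hmix]
  have hfac : (m.factorial : ℂ) ≠ 0 := Nat.cast_ne_zero.2 (Nat.factorial_ne_zero m)
  field_simp
end
end
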